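/- Let 1 ≤ c₁ < c₂ be real numbers and k a real number. Then the function t ↦ cos(k t)/√(t² − 1) is integrable on (c₁, c₂) (even when c₁ = 1, where the singularity is integrable), the function t ↦ sin(k t) · log(t + √(t² − 1)) is integrable on (c₁, c₂), and ∫_{c₁}^{c₂} cos(k t)/√(t² − 1) dt = cos(k c₂) log(c₂ + √(c₂² − 1)) − cos(k c₁) log(c₁ + √(c₁² − 1)) + k ∫_{c₁}^{c₂} sin(k t) · log(t + √(t² − 1)) dt. (The integration-by-parts formula, Eq. (15) of the paper, used on the interval (1,2) where log(t + √(t² − 1)) is not singular at t = 1.) -/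

import Mathlib

open MeasureTheory Real Filter intervalIntegral

private lemma msL_continuousAt {x : ℝ} (hx : 1 ≤ x) :
    ContinuousAt (fun t : ℝ => Real.log (t + Real.sqrt (t ^ 2 - 1))) x := by
  have hc : Continuous (fun t : ℝ => t + Real.sqrt (t ^ 2 - 1)) := by
    continuity
  have hpos : 0 < x + Real.sqrt (x ^ 2 - 1) := by
    have := Real.sqrt_nonneg (x ^ 2 - 1); linarith
  exact ContinuousAt.log hc.continuousAt (ne_of_gt hpos)

private lemma msL_hasDerivAt {x : ℝ} (hx : 1 < x) :
    HasDerivAt (fun t : ℝ => Real.log (t + Real.sqrt (t ^ 2 - 1)))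
      (1 / Real.sqrt (x ^ 2 - 1)) x := by
  have hpos : (0:ℝ) < x ^ 2 - 1 := by nlinarith
  have hs : 0 < Real.sqrt (x ^ 2 - 1) := Real.sqrt_pos.2 hpos
  have h1 : HasDerivAt (fun t : ℝ => t ^ 2 - 1) (2 * x) x := by
    simpa using ((hasDerivAt_pow 2 x).sub_const 1)
  have h2 : HasDerivAt (fun t : ℝ => Real.sqrt (t ^ 2 - 1))
      (x / Real.sqrt (x ^ 2 - 1)) x := by
    have := (Real.hasDerivAt_sqrt (ne_of_gt hpos)).comp x h1
    refine this.congr_deriv (Eq.symm ?_)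
    field_simp
  have h3 : HasDerivAt (fun t : ℝ => t + Real.sqrt (t ^ 2 - 1))
      (1 + x / Real.sqrt (x ^ 2 - 1)) x := (hasDerivAt_id x).add h2
  have hposi : 0 < x + Real.sqrt (x ^ 2 - 1) := by positivity
  have := (Real.hasDerivAt_log (ne_of_gt hposi)).comp x h3
  refine this.congr_deriv (Eq.symm ?_)
  have hsq : Real.sqrt (x ^ 2 - 1) ^ 2 = x ^ 2 - 1 := Real.sq_sqrt hpos.le
  field_simp
  nlinarith [hsq]

theorem mehler_sonine_integration_by_parts (c₁ c₂ k : ℝ) (h1 : 1 ≤ c₁) (h12 : c₁ < c₂) :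
    IntegrableOn (fun t : ℝ => Real.cos (k * t) / Real.sqrt (t ^ 2 - 1)) (Set.Ioo c₁ c₂) ∧
    IntegrableOn (fun t : ℝ => Real.sin (k * t) * Real.log (t + Real.sqrt (t ^ 2 - 1)))
      (Set.Ioo c₁ c₂) ∧
    ∫ t in c₁..c₂, Real.cos (k * t) / Real.sqrt (t ^ 2 - 1) =
      Real.cos (k * c₂) * Real.log (c₂ + Real.sqrt (c₂ ^ 2 - 1))
        - Real.cos (k * c₁) * Real.log (c₁ + Real.sqrt (c₁ ^ 2 - 1))
        + k * ∫ t in c₁..c₂, Real.sin (k * t) * Real.log (t + Real.sqrt (t ^ 2 - 1)) := by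
  set L : ℝ → ℝ := fun t => Real.log (t + Real.sqrt (t ^ 2 - 1)) with hL
  set f : ℝ → ℝ := fun t => Real.cos (k * t) / Real.sqrt (t ^ 2 - 1) with hf
  set g : ℝ → ℝ := fun t => Real.sin (k * t) * L t with hg
  -- integrability of f on Ioo
  have hmaj : IntegrableOn (fun t : ℝ => (t - 1) ^ (-(1/2) : ℝ)) (Set.Ioo c₁ c₂) := by
    have h := (intervalIntegral.intervalIntegrable_rpow'
      (a := c₁ - 1) (b := c₂ - 1) (r := -(1/2)) (by norm_num)).comp_sub_right 1
    simp only [sub_add_cancel] at h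
    exact (h.1.mono_set Set.Ioo_subset_Ioc_self)
  have hfmeas : AEStronglyMeasurable f (volume.restrict (Set.Ioo c₁ c₂)) := by
    apply Measurable.aestronglyMeasurable
    exact ((Real.continuous_cos.comp (continuous_const.mul continuous_id)).measurable).div
      ((Real.continuous_sqrt.comp (by continuity)).measurable)
  have hfint : IntegrableOn f (Set.Ioo c₁ c₂) := by
    apply Integrable.mono hmaj hfmeas
    filter_upwards [ae_restrict_mem measurableSet_Ioo] with t ht
    have ht1 : 1 < t := lt_of_le_of_lt h1 ht.1
    have hpos : (0:ℝ) < t ^ 2 - 1 := by nlinarith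
    have hs : 0 < Real.sqrt (t ^ 2 - 1) := Real.sqrt_pos.2 hpos
    have hle : Real.sqrt (t - 1) ≤ Real.sqrt (t ^ 2 - 1) :=
      Real.sqrt_le_sqrt (by nlinarith)
    have hs1 : 0 < Real.sqrt (t - 1) := Real.sqrt_pos.2 (by linarith)
    have hrw : (t - 1) ^ (-(1/2) : ℝ) = (Real.sqrt (t - 1))⁻¹ := by
      rw [Real.rpow_neg (by linarith), ← Real.sqrt_eq_rpow]
    simp only [hf, Real.norm_eq_abs]
    rw [hrw, abs_div, abs_of_pos (inv_pos.2 hs1), abs_of_pos hs]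
    calc |Real.cos (k * t)| / Real.sqrt (t ^ 2 - 1)
        ≤ 1 / Real.sqrt (t ^ 2 - 1) := by
          gcongr
          exact Real.abs_cos_le_one _
      _ ≤ (Real.sqrt (t - 1))⁻¹ := by
          rw [one_div]
          gcongr
  -- continuity & integrability of g
  have hLcont : ∀ x ∈ Set.uIcc c₁ c₂, ContinuousWithinAt L (Set.uIcc c₁ c₂) x := by
    intro x hx
    rw [Set.uIcc_of_le h12.le] at hx
    exact (msL_continuousAt (le_trans h1 hx.1)).continuousWithinAt
  have hgcont : ContinuousOn g (Set.uIcc c₁ c₂) := by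
    intro x hx
    exact ((Real.continuous_sin.comp (continuous_const.mul continuous_id)).continuousWithinAt).mul
      (hLcont x hx)
  have hgii : IntervalIntegrable g volume c₁ c₂ := hgcont.intervalIntegrable
  have hgint : IntegrableOn g (Set.Ioo c₁ c₂) := by
    rw [intervalIntegrable_iff_integrableOn_Ioc_of_le h12.le] at hgii
    exact hgii.mono_set Set.Ioo_subset_Ioc_self
  have hfii : IntervalIntegrable f volume c₁ c₂ := by
    rw [intervalIntegrable_iff_integrableOn_Ioc_of_le h12.le]
    exact hfint.congr_set_ae MeasureTheory.Ioo_ae_eq_Ioc.symm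
  refine ⟨hfint, hgint, ?_⟩
  -- FTC part
  set F : ℝ → ℝ := fun t => Real.cos (k * t) * L t with hF
  have hderiv : ∀ x ∈ Set.Ioo c₁ c₂, HasDerivAt F (f x - k * g x) x := by
    intro x hx
    have hx1 : 1 < x := lt_of_le_of_lt h1 hx.1
    have hpos : (0:ℝ) < x ^ 2 - 1 := by nlinarith
    have hm : HasDerivAt (fun t : ℝ => k * t) k x := by
      simpa using (hasDerivAt_id x).const_mul k
    have hcos : HasDerivAt (fun t : ℝ => Real.cos (k * t)) (-Real.sin (k * x) * k) x := hm.cos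
    have := hcos.mul (msL_hasDerivAt hx1)
    refine this.congr_deriv (Eq.symm ?_)
    rw [hf, hg, hL]
    have hs : Real.sqrt (x ^ 2 - 1) ≠ 0 := ne_of_gt (Real.sqrt_pos.2 hpos)
    field_simp
    ring
  have hFii : IntervalIntegrable (fun x => f x - k * g x) volume c₁ c₂ :=
    hfii.sub ((hgii.const_mul k))
  have hC₁ : Tendsto F (nhdsWithin c₁ (Set.Ioi c₁)) (nhds (F c₁)) := by
    apply Filter.Tendsto.mono_left _ nhdsWithin_le_nhds
    exact ((Real.continuous_cos.comp (continuous_const.mul continuous_id)).continuousAt.mul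
      (msL_continuousAt h1))
  have hC₂ : Tendsto F (nhdsWithin c₂ (Set.Iio c₂)) (nhds (F c₂)) := by
    apply Filter.Tendsto.mono_left _ nhdsWithin_le_nhds
    exact ((Real.continuous_cos.comp (continuous_const.mul continuous_id)).continuousAt.mul
      (msL_continuousAt (le_trans h1 h12.le)))
  have hFTC := intervalIntegral.integral_eq_sub_of_hasDerivAt_of_tendsto h12 hderiv hFii hC₁ hC₂
  have hsplit : ∫ x in c₁..c₂, (f x - k * g x) =
      (∫ x in c₁..c₂, f x) - k * ∫ x in c₁..c₂, g x := by
    rw [intervalIntegral.integral_sub hfii (hgii.const_mul k),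
      intervalIntegral.integral_const_mul]
  rw [hsplit] at hFTC
  have : (∫ x in c₁..c₂, f x) = F c₂ - F c₁ + k * ∫ x in c₁..c₂, g x := by linarith
  simpa [hF, hf, hg, hL] using this
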